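/- Convergence of the scaled hitting-time density: fix a>0, r∈ℝ, β>0, σ>0, σ_A>0 and define, for N≥2 and t>0, g_N(t) = ((1−λ(a))f_N(a) − r)/(√(2π)·σ·t^{3/2}) · exp(−((1−λ(a))f_N(a) − r + (1−λ(a))βt)²/(2σ²t)). Then for every k∈ℝ, N·√(log N)·g_N(T_N(a,k)) converges, as N→∞, to β²·exp( β·(8a²β²r − β³k²σ√(2aβ+σ²) + 8aβrσ² + 2rσ⁴)/(σ·(2aβ+σ²)^{5/2}) ) / (√π·(2aβ+σ²)). -/

import Mathlib

open MeasureTheory Filter Real Set Topology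

set_option maxHeartbeats 2000000

noncomputable section

/-- The threshold `f_N(a) = (σ²/(2β) + a) log N`. -/
def fN (β σ a : ℝ) (N : ℕ) : ℝ := (σ ^ 2 / (2 * β) + a) * Real.log N

/-- `λ(a) = 1 - σ/√(2aβ + σ²)`. -/
def lam (β σ a : ℝ) : ℝ := 1 - σ / Real.sqrt (2 * a * β + σ ^ 2)

/-- `T_N(a,k) = f_N(a)/β + k √(log N)`. -/
def TN (β σ a : ℝ) (N : ℕ) (k : ℝ) : ℝ := fN β σ a N / β + k * Real.sqrt (Real.log N)

/-- The density of the first hitting time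
`τ_i(a,-r) = inf{t > 0 : W_i(t) - (1-λ(a))βt > (1-λ(a))f_N(a) - r}`
of a Brownian motion with standard deviation `σ`:
`g_N(t) = ((1-λ(a))f_N(a) - r)/(√(2π) σ t^{3/2})
  · exp(-((1-λ(a))f_N(a) - r + (1-λ(a))βt)²/(2σ²t))`. -/
def hittingDensity (β σ a r : ℝ) (N : ℕ) (t : ℝ) : ℝ :=
  ((1 - lam β σ a) * fN β σ a N - r) / (Real.sqrt (2 * π) * σ * t ^ ((3 : ℝ) / 2)) *
    Real.exp (-((1 - lam β σ a) * fN β σ a N - r + (1 - lam β σ a) * β * t) ^ 2 /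
      (2 * σ ^ 2 * t))

/-- **Convergence of the scaled hitting-time density.** For every `k ∈ ℝ`,
`N √(log N) g_N(T_N(a,k))` converges to
`β² exp(β(8a²β²r - β³k²σ√(2aβ+σ²) + 8aβrσ² + 2rσ⁴)/(σ(2aβ+σ²)^{5/2})) / (√π (2aβ+σ²))`. -/
theorem hittingDensity_scaled_limit
    (a r β σ σA : ℝ) (ha : 0 < a) (hβ : 0 < β) (hσ : 0 < σ) (hσA : 0 < σA) (k : ℝ) :
    Tendsto (fun N : ℕ =>
        (N : ℝ) * Real.sqrt (Real.log N) * hittingDensity β σ a r N (TN β σ a N k))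
      atTop
      (𝓝 (β ^ 2 * Real.exp (β *
            (8 * a ^ 2 * β ^ 2 * r - β ^ 3 * k ^ 2 * σ * Real.sqrt (2 * a * β + σ ^ 2)
              + 8 * a * β * r * σ ^ 2 + 2 * r * σ ^ 4) /
            (σ * (2 * a * β + σ ^ 2) ^ ((5 : ℝ) / 2))) /
          (Real.sqrt π * (2 * a * β + σ ^ 2)))) := by
  have hpos : (0:ℝ) < 2 * a * β + σ ^ 2 := by positivity
  set s : ℝ := Real.sqrt (2 * a * β + σ ^ 2) with hsdef
  have hs : 0 < s := Real.sqrt_pos.mpr hpos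
  have hs2 : s ^ 2 = 2 * a * β + σ ^ 2 := Real.sq_sqrt hpos.le
  have hsne : s ≠ 0 := ne_of_gt hs
  have hσne : σ ≠ 0 := ne_of_gt hσ
  have hβne : β ≠ 0 := ne_of_gt hβ
  have hπ : (0:ℝ) < π := Real.pi_pos
  have key3 : ∀ y : ℝ, 0 ≤ y → (y ^ 2 : ℝ) ^ ((3:ℝ)/2) = y ^ 3 := by
    intro y hy
    rw [← Real.rpow_natCast y 2, ← Real.rpow_mul hy, ← Real.rpow_natCast y 3]
    norm_num
  have key5 : ∀ y : ℝ, 0 ≤ y → (y ^ 2 : ℝ) ^ ((5:ℝ)/2) = y ^ 5 := by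
    intro y hy
    rw [← Real.rpow_natCast y 2, ← Real.rpow_mul hy, ← Real.rpow_natCast y 5]
    norm_num
  set ψ : ℝ → ℝ := fun x =>
    (σ*s/(2*β) - r/x^2) / (Real.sqrt (2*π) * σ * (s^2/(2*β^2) + k/x) ^ ((3:ℝ)/2)) *
      Real.exp ((2*σ*s*r/β - σ^2*β^2*k^2/s^2 + 2*σ*β*k*r/(s*x) - r^2/x^2) /
        (2*σ^2*(s^2/(2*β^2) + k/x))) with hψdef
  set V : ℝ := (σ*s/(2*β)) / (Real.sqrt (2*π) * σ * (s^2/(2*β^2)) ^ ((3:ℝ)/2)) *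
      Real.exp ((2*σ*s*r/β - σ^2*β^2*k^2/s^2) / (2*σ^2*(s^2/(2*β^2)))) with hVdef
  have hb : (0:ℝ) < s^2/(2*β^2) := by positivity
  -- convergence of ψ at infinity
  have hdiv2 : Tendsto (fun x : ℝ => r / x^2) atTop (𝓝 0) :=
    tendsto_const_nhds.div_atTop (tendsto_pow_atTop (by norm_num : (2:ℕ) ≠ 0))
  have hdivk : Tendsto (fun x : ℝ => k / x) atTop (𝓝 0) :=
    tendsto_const_nhds.div_atTop tendsto_id
  have hdivc : Tendsto (fun x : ℝ => 2*σ*β*k*r / (s*x)) atTop (𝓝 0) :=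
    tendsto_const_nhds.div_atTop (Tendsto.const_mul_atTop hs tendsto_id)
  have hdivr2 : Tendsto (fun x : ℝ => r^2 / x^2) atTop (𝓝 0) :=
    tendsto_const_nhds.div_atTop (tendsto_pow_atTop (by norm_num : (2:ℕ) ≠ 0))
  have hnum : Tendsto (fun x : ℝ => σ*s/(2*β) - r/x^2) atTop (𝓝 (σ*s/(2*β))) := by
    simpa using tendsto_const_nhds.sub hdiv2
  have hbase : Tendsto (fun x : ℝ => s^2/(2*β^2) + k/x) atTop (𝓝 (s^2/(2*β^2))) := by
    simpa using tendsto_const_nhds.add hdivk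
  have hden : Tendsto (fun x : ℝ => Real.sqrt (2*π) * σ * (s^2/(2*β^2) + k/x) ^ ((3:ℝ)/2))
      atTop (𝓝 (Real.sqrt (2*π) * σ * (s^2/(2*β^2)) ^ ((3:ℝ)/2))) :=
    tendsto_const_nhds.mul (hbase.rpow_const (Or.inl hb.ne'))
  have hdenne : Real.sqrt (2*π) * σ * (s^2/(2*β^2)) ^ ((3:ℝ)/2) ≠ 0 := by positivity
  have hexpnum : Tendsto
      (fun x : ℝ => 2*σ*s*r/β - σ^2*β^2*k^2/s^2 + 2*σ*β*k*r/(s*x) - r^2/x^2)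
      atTop (𝓝 (2*σ*s*r/β - σ^2*β^2*k^2/s^2)) := by
    simpa using (tendsto_const_nhds.add hdivc).sub hdivr2
  have hexpden : Tendsto (fun x : ℝ => 2*σ^2*(s^2/(2*β^2) + k/x)) atTop
      (𝓝 (2*σ^2*(s^2/(2*β^2)))) := tendsto_const_nhds.mul hbase
  have hexpdenne : 2*σ^2*(s^2/(2*β^2)) ≠ 0 := by positivity
  have hψt : Tendsto ψ atTop (𝓝 V) :=
    (hnum.div hden hdenne).mul ((hexpnum.div hexpden hexpdenne).rexp)
  -- √(log N) → ∞
  have hsqrt : Tendsto Real.sqrt atTop atTop := by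
    have h := tendsto_rpow_atTop (show (0:ℝ) < 1/2 by norm_num)
    exact h.congr fun x => (Real.sqrt_eq_rpow x).symm
  have hu : Tendsto (fun N : ℕ => Real.sqrt (Real.log N)) atTop atTop :=
    hsqrt.comp (Real.tendsto_log_atTop.comp tendsto_natCast_atTop_atTop)
  -- eventual positivity of T
  have hTaux : Tendsto (fun x : ℝ => x * (s^2/(2*β^2) * x + k)) atTop atTop :=
    tendsto_id.atTop_mul_atTop₀
      (tendsto_atTop_add_const_right _ k (Tendsto.const_mul_atTop hb tendsto_id))
  have hTev : ∀ᶠ N : ℕ in atTop,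
      0 < s^2*(Real.sqrt (Real.log N))^2/(2*β^2) + k*Real.sqrt (Real.log N) := by
    filter_upwards [(hTaux.comp hu).eventually_gt_atTop 0] with N hN
    have heq : (Real.sqrt (Real.log N)) * (s^2/(2*β^2) * Real.sqrt (Real.log N) + k)
        = s^2*(Real.sqrt (Real.log N))^2/(2*β^2) + k*Real.sqrt (Real.log N) := by ring
    exact heq ▸ hN
  -- eventual equality
  have heq : (fun N : ℕ => ψ (Real.sqrt (Real.log N))) =ᶠ[atTop]
      (fun N : ℕ => (N:ℝ) * Real.sqrt (Real.log N) *
        hittingDensity β σ a r N (TN β σ a N k)) := by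
    filter_upwards [hu.eventually_gt_atTop 0, hTev, eventually_ge_atTop 1] with N hx hT hN1
    set x : ℝ := Real.sqrt (Real.log N) with hxdef
    have hL : 0 < Real.log N := Real.sqrt_pos.mp hx
    have hx2 : x ^ 2 = Real.log N := Real.sq_sqrt hL.le
    have hNpos : (0:ℝ) < N := by exact_mod_cast Nat.lt_of_lt_of_le Nat.zero_lt_one hN1
    have hNexp : (N:ℝ) = Real.exp (x^2) := by rw [hx2, Real.exp_log hNpos]
    set T : ℝ := s^2*x^2/(2*β^2) + k*x with hTdef
    have hTpos : 0 < T := hT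
    have hTne : T ≠ 0 := ne_of_gt hTpos
    have hxne : x ≠ 0 := ne_of_gt hx
    have ha' : σ^2/(2*β) + a = s^2/(2*β) := by rw [hs2]; field_simp; ring
    have hTN : TN β σ a N k = T := by
      simp only [TN, fN, ← hx2, ← hxdef, ha', hTdef]
      field_simp
      rw [Real.sqrt_sq hx.le]
      ring
    have hfN : (1 - lam β σ a) * fN β σ a N = σ*s*x^2/(2*β) := by
      simp only [lam, fN, ← hx2, ← hxdef, ha', ← hsdef]
      field_simp
      ring
    have hlamT : (1 - lam β σ a) * β * T = σ*β*T/s := by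
      simp only [lam, ← hsdef]
      field_simp
      ring
    have hb2 : s^2/(2*β^2) + k/x = T/x^2 := by rw [hTdef]; field_simp
    have hT32 : (0:ℝ) < T^((3:ℝ)/2) := Real.rpow_pos_of_pos hTpos _
    have h2π : (0:ℝ) < Real.sqrt (2*π) := Real.sqrt_pos.mpr (by positivity)
    have hpre : (σ*s/(2*β) - r/x^2) / (Real.sqrt (2*π)*σ*(T^((3:ℝ)/2)/x^3))
        = x * ((σ*s*x^2/(2*β) - r) / (Real.sqrt (2*π)*σ*T^((3:ℝ)/2))) := by
      field_simp
    have hX : σ*s*x^2/(2*β) - r + σ*β*T/s = σ*s*x^2/β + σ*β*k*x/s - r := by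
      rw [hTdef]; field_simp; ring
    have hnumid : (2*σ*s*r/β - σ^2*β^2*k^2/s^2 + 2*σ*β*k*r/(s*x) - r^2/x^2) * x^2
        = x^2*(2*σ^2*T) - (σ*s*x^2/β + σ*β*k*x/s - r)^2 := by
      rw [hTdef]; field_simp; ring
    have harg : (2*σ*s*r/β - σ^2*β^2*k^2/s^2 + 2*σ*β*k*r/(s*x) - r^2/x^2) / (2*σ^2*(T/x^2))
        = x^2 + (-(σ*s*x^2/(2*β) - r + σ*β*T/s)^2/(2*σ^2*T)) := by
      rw [hX, show 2*σ^2*(T/x^2) = 2*σ^2*T/x^2 from by ring, div_div_eq_mul_div, hnumid]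
      field_simp
      ring
    rw [hTN]
    simp only [hψdef, hittingDensity]
    rw [hfN, hlamT, hb2, Real.div_rpow hTpos.le (sq_nonneg x), key3 x hx.le, hpre, harg,
      Real.exp_add, hNexp]
    ring
  have main : Tendsto (fun N : ℕ => (N:ℝ) * Real.sqrt (Real.log N) *
      hittingDensity β σ a r N (TN β σ a N k)) atTop (𝓝 V) :=
    (hψt.comp hu).congr' heq
  convert main using 2
  rw [hVdef, ← hs2, key5 s hs.le]
  have e1 : β*(8*a^2*β^2*r - β^3*k^2*σ*s + 8*a*β*r*σ^2 + 2*r*σ^4)/(σ*s^5)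
      = 2*β*r/(σ*s) - β^4*k^2/s^4 := by
    rw [show 8*a^2*β^2*r - β^3*k^2*σ*s + 8*a*β*r*σ^2 + 2*r*σ^4
        = 2*r*s^2*s^2 - β^3*k^2*σ*s from by
      linear_combination (-2*r*(s^2 + 2*a*β + σ^2)) * hs2]
    field_simp
  have e2 : (2*σ*s*r/β - σ^2*β^2*k^2/s^2)/(2*σ^2*(s^2/(2*β^2)))
      = 2*β*r/(σ*s) - β^4*k^2/s^4 := by
    field_simp
  rw [e1, e2]
  have h32 : (s^2/(2*β^2)) ^ ((3:ℝ)/2) = (s/(Real.sqrt 2*β))^3 := by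
    rw [show s^2/(2*β^2) = (s/(Real.sqrt 2*β))^2 from by
      rw [div_pow, mul_pow, Real.sq_sqrt (by norm_num : (0:ℝ) ≤ 2)],
      key3 _ (by positivity)]
  have hcube : (s/(Real.sqrt 2*β))^3 = s^3/(2*Real.sqrt 2*β^3) := by
    rw [div_pow, mul_pow, show (Real.sqrt 2)^3 = 2*Real.sqrt 2 from by
      rw [pow_succ, Real.sq_sqrt (by norm_num : (0:ℝ) ≤ 2)]]
  have hsq2 : Real.sqrt (2*π) = Real.sqrt 2 * Real.sqrt π :=
    Real.sqrt_mul (by norm_num) π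
  rw [h32, hcube, hsq2]
  have h2pos : (0:ℝ) < Real.sqrt 2 := by positivity
  have hπs : (0:ℝ) < Real.sqrt π := Real.sqrt_pos.mpr hπ
  field_simp

end
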